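/- (Invariance under nonsingular transformations.) Let Λ be a cross-impact model which is split-invariant and rotation-invariant. Then for every invertible real n×n matrix M and every triple (Σ,Ω,R): Λ((M⁻¹)ᵀ Σ M⁻¹, M Ω Mᵀ, (M⁻¹)ᵀ R Mᵀ) = (M⁻¹)ᵀ Λ(Σ,Ω,R) M⁻¹; i.e. any split- and rotation-invariant cross-impact model is invariant under the action of any nonsingular matrix. -/

import Mathlib

open Matrix
open scoped Classical

/-- `sqrtm A` is the unique symmetric positive semidefinite square root of a
symmetric positive semidefinite real matrix `A` (junk value `0` otherwise). -/
noncomputable def sqrtm {n : ℕ} (A : Matrix (Fin n) (Fin n) ℝ) : Matrix (Fin n) (Fin n) ℝ :=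
  if h : A.PosSemidef then
    h.1.eigenvectorUnitary.1 * diagonal ((RCLike.ofReal : ℝ → ℝ) ∘ Real.sqrt ∘ h.1.eigenvalues) *
      (star h.1.eigenvectorUnitary : Matrix (Fin n) (Fin n) ℝ)
  else 0

/-- The Kyle cross-impact matrix `Λ_kyle(Σ,Ω) = (√Ω)⁻¹ √(√Ω Σ √Ω) (√Ω)⁻¹`. -/
noncomputable def kyle {n : ℕ} (S W : Matrix (Fin n) (Fin n) ℝ) : Matrix (Fin n) (Fin n) ℝ :=
  (sqrtm W)⁻¹ * sqrtm (sqrtm W * S * sqrtm W) * (sqrtm W)⁻¹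

section aux
variable {n : ℕ}

private lemma ct_eq_t (A : Matrix (Fin n) (Fin n) ℝ) : Aᴴ = Aᵀ :=
  conjTranspose_eq_transpose_of_trivial A

private lemma posSemidef_conj {S : Matrix (Fin n) (Fin n) ℝ} (hS : S.PosSemidef)
    (B : Matrix (Fin n) (Fin n) ℝ) : (B * S * Bᵀ).PosSemidef := by
  have := hS.mul_mul_conjTranspose_same B
  rwa [ct_eq_t] at this

private lemma posDef_conj {W B : Matrix (Fin n) (Fin n) ℝ} (hW : W.PosDef) (hB : IsUnit B.det) :
    (B * W * Bᵀ).PosDef := by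
  rw [posDef_iff_dotProduct_mulVec]
  constructor
  · have := isHermitian_mul_mul_conjTranspose B hW.1
    rwa [ct_eq_t] at this
  · intro x hx
    have hy : Bᵀ *ᵥ x ≠ 0 := by
      have : Function.Injective (Bᵀ.mulVec) := by
        rw [mulVec_injective_iff_isUnit]
        exact (isUnit_iff_isUnit_det _).2 (by simpa [det_transpose] using hB)
      intro h
      exact hx (this (by simpa using h))
    have := hW.dotProduct_mulVec_pos hy
    have key : star x ⬝ᵥ (B * W * Bᵀ) *ᵥ x
        = star (Bᵀ *ᵥ x) ⬝ᵥ W *ᵥ (Bᵀ *ᵥ x) := by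
      rw [star_trivial, star_trivial, ← mulVec_mulVec, ← mulVec_mulVec,
        dotProduct_mulVec, ← mulVec_transpose]
    rw [key]; exact this

/-- Invariance of `Λ` under the action of the matrix `N`. -/
def GLGood (Λ : Matrix (Fin n) (Fin n) ℝ → Matrix (Fin n) (Fin n) ℝ → Matrix (Fin n) (Fin n) ℝ → Matrix (Fin n) (Fin n) ℝ)
    (N : Matrix (Fin n) (Fin n) ℝ) : Prop :=
  ∀ S W R : Matrix (Fin n) (Fin n) ℝ, S.PosSemidef → W.PosDef →
    Λ ((N⁻¹)ᵀ * S * N⁻¹) (N * W * Nᵀ) ((N⁻¹)ᵀ * R * Nᵀ) = (N⁻¹)ᵀ * Λ S W R * N⁻¹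

private lemma glgood_mul {Λ : Matrix (Fin n) (Fin n) ℝ → Matrix (Fin n) (Fin n) ℝ → Matrix (Fin n) (Fin n) ℝ → Matrix (Fin n) (Fin n) ℝ}
    {A B : Matrix (Fin n) (Fin n) ℝ} (hB : IsUnit B.det)
    (hA : GLGood Λ A) (hBg : GLGood Λ B) : GLGood Λ (A * B) := by
  intro S W R hS hW
  have hS' : ((B⁻¹)ᵀ * S * B⁻¹).PosSemidef := by
    have := posSemidef_conj hS (B⁻¹)ᵀ
    rwa [transpose_transpose] at this
  have hW' : (B * W * Bᵀ).PosDef := posDef_conj hW hB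
  have e := hA ((B⁻¹)ᵀ * S * B⁻¹) (B * W * Bᵀ) ((B⁻¹)ᵀ * R * Bᵀ) hS' hW'
  rw [hBg S W R hS hW] at e
  simp only [Matrix.mul_inv_rev, transpose_mul, Matrix.mul_assoc] at e ⊢
  exact e
end aux

/-- any split- and rotation-invariant cross-impact model is invariant
under the action of any nonsingular matrix. -/
theorem split_rot_invariant_implies_GL_invariant {n : ℕ}
    (Λ : Matrix (Fin n) (Fin n) ℝ → Matrix (Fin n) (Fin n) ℝ → Matrix (Fin n) (Fin n) ℝ → Matrix (Fin n) (Fin n) ℝ)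
    (hsplit : ∀ S W R : Matrix (Fin n) (Fin n) ℝ, S.PosSemidef → W.PosDef → ∀ d : Fin n → ℝ, (∀ i, 0 < d i) →
      Λ ((diagonal d)⁻¹ * S * (diagonal d)⁻¹) (diagonal d * W * diagonal d)
        ((diagonal d)⁻¹ * R * diagonal d)
        = (diagonal d)⁻¹ * Λ S W R * (diagonal d)⁻¹)
    (hrot : ∀ S W R : Matrix (Fin n) (Fin n) ℝ, S.PosSemidef → W.PosDef → ∀ O : Matrix (Fin n) (Fin n) ℝ, O * Oᵀ = 1 →
      Λ (O * S * Oᵀ) (O * W * Oᵀ) (O * R * Oᵀ) = O * Λ S W R * Oᵀ)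
    (M : Matrix (Fin n) (Fin n) ℝ) (hM : IsUnit M.det)
    (S W R : Matrix (Fin n) (Fin n) ℝ) (hS : S.PosSemidef) (hW : W.PosDef) :
    Λ ((M⁻¹)ᵀ * S * M⁻¹) (M * W * Mᵀ) ((M⁻¹)ᵀ * R * Mᵀ)
      = (M⁻¹)ᵀ * Λ S W R * M⁻¹ := by
  -- Good for orthogonal matrices
  have good_orth : ∀ O : Matrix (Fin n) (Fin n) ℝ, O * Oᵀ = 1 → GLGood Λ O := by
    intro O hO S' W' R' hS' hW'
    have hOi : O⁻¹ = Oᵀ := inv_eq_right_inv hO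
    rw [hOi, transpose_transpose]
    exact hrot S' W' R' hS' hW' O hO
  -- Good for positive diagonal matrices
  have good_diag : ∀ d : Fin n → ℝ, (∀ i, 0 < d i) → GLGood Λ (diagonal d) := by
    intro d hd S' W' R' hS' hW'
    have h1 : ((diagonal d)⁻¹)ᵀ = (diagonal d)⁻¹ := by
      rw [transpose_nonsing_inv, diagonal_transpose]
    rw [h1, diagonal_transpose]
    exact hsplit S' W' R' hS' hW' d hd
  -- Polar + spectral decomposition of M
  have hMT : IsUnit (Mᵀ).det := by rwa [det_transpose]
  have hP2 : (Mᵀ * M).PosDef := by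
    have := posDef_conj (PosDef.one (n := Fin n) (R := ℝ)) hMT
    simpa using this
  set P : Matrix (Fin n) (Fin n) ℝ := (open scoped MatrixOrder in CFC.sqrt (Mᵀ * M)) with hPdef
  have hPsd : P.PosSemidef := open scoped MatrixOrder in Matrix.nonneg_iff_posSemidef.mp (CFC.sqrt_nonneg _)
  have hPP : P * P = Mᵀ * M := open scoped MatrixOrder in
    CFC.sqrt_mul_sqrt_self _ (Matrix.nonneg_iff_posSemidef.mpr hP2.posSemidef)
  have hPdet : IsUnit P.det := by
    have h2 : P.det * P.det = (Mᵀ * M).det := by rw [← det_mul, hPP]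
    have : (Mᵀ * M).det ≠ 0 := (hP2.det_pos).ne'
    have hne : P.det ≠ 0 := fun h => this (by rw [← h2, h, mul_zero])
    exact hne.isUnit
  have hPt : Pᵀ = P := by
    have := hPsd.1
    rwa [IsHermitian, ct_eq_t] at this
  -- eigenvalues are positive
  set d := hPsd.1.eigenvalues with hddef
  have hdpos : ∀ i, 0 < d i := by
    intro i
    rcases lt_or_eq_of_le (hPsd.eigenvalues_nonneg i) with h | h
    · exact h
    · exfalso
      have hdet : P.det = ∏ i, (d i : ℝ) := by
        simpa using hPsd.1.det_eq_prod_eigenvalues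
      rw [hdet] at hPdet
      exact (Finset.prod_eq_zero (Finset.mem_univ i) h.symm ▸ hPdet).ne_zero rfl
  set Q : Matrix (Fin n) (Fin n) ℝ := (hPsd.1.eigenvectorUnitary : Matrix (Fin n) (Fin n) ℝ) with hQdef
  have hQs : star Q = Qᵀ := by rw [Matrix.star_eq_conjTranspose, ct_eq_t]
  have hQ1 : Q * Qᵀ = 1 := by
    rw [← hQs]; exact mem_unitaryGroup_iff.mp (hPsd.1.eigenvectorUnitary).2
  have hQ1' : Qᵀ * Q = 1 := by
    rw [← hQs]; exact mem_unitaryGroup_iff'.mp (hPsd.1.eigenvectorUnitary).2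
  have hspec : P = Q * diagonal d * Qᵀ := by
    have := hPsd.1.spectral_theorem
    rw [Unitary.conjStarAlgAut_apply, ← hQdef, hQs] at this
    exact this
  set U : Matrix (Fin n) (Fin n) ℝ := M * P⁻¹ with hUdef
  have hPinvT : (P⁻¹)ᵀ = P⁻¹ := by rw [transpose_nonsing_inv, hPt]
  have hU1 : U * Uᵀ = 1 := by
    have hPP' : P⁻¹ * P⁻¹ = M⁻¹ * (Mᵀ)⁻¹ := by
      rw [← Matrix.mul_inv_rev, hPP, Matrix.mul_inv_rev]
    have h0 : U * Uᵀ = M * (P⁻¹ * P⁻¹ * Mᵀ) := by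
      rw [hUdef, transpose_mul, hPinvT]
      simp only [Matrix.mul_assoc]
    rw [h0, hPP', Matrix.mul_assoc M⁻¹ (Mᵀ)⁻¹ Mᵀ, nonsing_inv_mul _ hMT,
      Matrix.mul_one, mul_nonsing_inv _ hM]
  have hMfact : M = U * (Q * (diagonal d * Qᵀ)) := by
    have hQDQ : Q * (diagonal d * Qᵀ) = P := by
      rw [hspec, Matrix.mul_assoc]
    rw [hQDQ, hUdef, Matrix.mul_assoc, nonsing_inv_mul _ hPdet, Matrix.mul_one]
  -- determinant units
  have hQdet : IsUnit Q.det := IsUnit.of_mul_eq_one _ (by rw [← det_mul, hQ1, det_one])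
  have hQTdet : IsUnit (Qᵀ).det := by rwa [det_transpose]
  have hDdet : IsUnit (diagonal d).det := by
    rw [det_diagonal]
    exact (Finset.prod_pos fun i _ => hdpos i).ne'.isUnit
  have hgood : GLGood Λ (U * (Q * (diagonal d * Qᵀ))) := by
    apply glgood_mul
    · rw [det_mul, det_mul]
      exact (hQdet.mul (hDdet.mul hQTdet))
    · exact good_orth U hU1
    · apply glgood_mul
      · rw [det_mul]; exact hDdet.mul hQTdet
      · exact good_orth Q hQ1
      · apply glgood_mul hQTdet (good_diag d hdpos)
        exact good_orth Qᵀ (by rw [transpose_transpose]; exact hQ1')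
  rw [hMfact]
  exact hgood S W R hS hW
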